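/- arXiv:2509.22160 — 5 statements merged into one kernel-verified Lean document; each statement's English description precedes it below -/
import Mathlib

section
/- Let G be a K_5-free graph with a linear vertex ordering, and let L assign to each vertex a subset of {1,2,3,4}. Suppose that for every triple x ≺ y ≺ z inducing the ordered pattern J (edges xy, xz, no edge yz) we have L(x) ∩ L(y) ∩ L(z) = ∅. Then every vertex v has at most 3 forward neighbors u (i.e., neighbors with v ≺ u) with i ∈ L(u), for each fixed color i ∈ L(v); consequently v has at most 12 forward neighbors u with L(u) ∩ L(v) ≠ ∅. -/
/-- Let `G` be a `K₅`-free ordered graph and `L` a list assignment with colors in `{1,2,3,4}`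
such that for every induced ordered pattern `J` (vertices `x ≺ y ≺ z` with edges `xy, xz` and
non-edge `yz`) the three lists have empty common intersection.  Then every vertex `v` has,
for each color `i ∈ L(v)`, at most 3 forward neighbors whose list contains `i`; consequently
`v` has at most 12 forward neighbors whose list meets `L(v)`. -/
theorem forward_neighbors_bound {V : Type} [Fintype V] [LinearOrder V]
    (G : SimpleGraph V) [DecidableRel G.Adj]
    (hK5 : G.CliqueFree 5)
    (L : V → Finset (Fin 4))
    (hJ : ∀ x y z : V, x < y → y < z → G.Adj x y → G.Adj x z → ¬G.Adj y z →
      L x ∩ L y ∩ L z = ∅) :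
    ∀ v : V,
      (∀ i ∈ L v,
        (Finset.univ.filter (fun u => G.Adj v u ∧ v < u ∧ i ∈ L u)).card ≤ 3) ∧
      (Finset.univ.filter (fun u => G.Adj v u ∧ v < u ∧ (L u ∩ L v).Nonempty)).card ≤ 12 := by
  intro v
  have key : ∀ i ∈ L v,
      (Finset.univ.filter (fun u => G.Adj v u ∧ v < u ∧ i ∈ L u)).card ≤ 3 := by
    intro i hi
    by_contra h
    push_neg at h
    have h4 : 4 ≤ (Finset.univ.filter (fun u => G.Adj v u ∧ v < u ∧ i ∈ L u)).card := h
    obtain ⟨S, hSsub, hScard⟩ := Finset.exists_subset_card_eq h4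
    -- members of S are pairwise adjacent
    have hpair : ∀ u ∈ S, ∀ w ∈ S, u ≠ w → G.Adj u w := by
      intro u hu w hw huw
      have hu' := hSsub hu
      have hw' := hSsub hw
      simp only [Finset.mem_filter] at hu' hw'
      obtain ⟨-, hau, hvu, hiu⟩ := hu'
      obtain ⟨-, haw, hvw, hiw⟩ := hw'
      rcases lt_or_gt_of_ne huw with hlt | hgt
      · by_contra hnadj
        have := hJ v u w hvu hlt hau haw hnadj
        have : i ∈ L v ∩ L u ∩ L w := by
          simp [hi, hiu, hiw]
        rw [‹L v ∩ L u ∩ L w = ∅›] at this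
        simp at this
      · by_contra hnadj
        have hnadj' : ¬G.Adj w u := fun h => hnadj h.symm
        have := hJ v w u hvw hgt haw hau hnadj'
        have : i ∈ L v ∩ L w ∩ L u := by
          simp [hi, hiu, hiw]
        rw [‹L v ∩ L w ∩ L u = ∅›] at this
        simp at this
    have hvS : v ∉ S := by
      intro hvin
      have := hSsub hvin
      simp only [Finset.mem_filter] at this
      exact G.loopless.irrefl v this.2.1
    have hclique : G.IsNClique 5 (insert v S) := by
      constructor
      · intro a ha b hb hab
        simp only [Finset.coe_insert, Set.mem_insert_iff, Finset.mem_coe] at ha hb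
        rcases ha with rfl | ha
        · rcases hb with rfl | hb
          · exact absurd rfl hab
          · have := hSsub hb
            simp only [Finset.mem_filter] at this
            exact this.2.1
        · rcases hb with rfl | hb
          · have := hSsub ha
            simp only [Finset.mem_filter] at this
            exact this.2.1.symm
          · exact hpair a ha b hb hab
      · rw [Finset.card_insert_of_notMem hvS, hScard]
    exact hK5 _ hclique
  refine ⟨key, ?_⟩
  have hsub : (Finset.univ.filter (fun u => G.Adj v u ∧ v < u ∧ (L u ∩ L v).Nonempty))
      ⊆ (L v).biUnion (fun i => Finset.univ.filter (fun u => G.Adj v u ∧ v < u ∧ i ∈ L u)) := by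
    intro u hu
    simp only [Finset.mem_filter, Finset.mem_univ, true_and] at hu
    obtain ⟨hau, hvu, j, hj⟩ := hu
    simp only [Finset.mem_inter] at hj
    exact Finset.mem_biUnion.2 ⟨j, hj.2, by simp [hau, hvu, hj.1]⟩
  calc (Finset.univ.filter (fun u => G.Adj v u ∧ v < u ∧ (L u ∩ L v).Nonempty)).card
      ≤ ((L v).biUnion (fun i => Finset.univ.filter
          (fun u => G.Adj v u ∧ v < u ∧ i ∈ L u))).card := Finset.card_le_card hsub
    _ ≤ ∑ i ∈ L v, (Finset.univ.filter (fun u => G.Adj v u ∧ v < u ∧ i ∈ L u)).card :=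
        Finset.card_biUnion_le
    _ ≤ ∑ _i ∈ L v, 3 := Finset.sum_le_sum key
    _ = (L v).card * 3 := by rw [Finset.sum_const, smul_eq_mul]
    _ ≤ 4 * 3 := by
        have : (L v).card ≤ 4 := by
          have := Finset.card_le_univ (L v)
          simpa using this
        omega
    _ = 12 := rfl
end

section
/- Let F_1 and F_2 be ordered graphs, each containing no induced copy of the ordered rainbow pattern (four vertices v1 ≺ v2 ≺ v3 ≺ v4 with exactly the edges v1v4 and v2v3 among the pattern's edges). Suppose F is formed from disjoint copies of F_1 and F_2 by identifying the last ℓ' vertices of F_1 (an independent set) with the first ℓ' vertices of F_2 (an independent set), preserving order, and adding no other edges. Then F contains no induced copy of the rainbow pattern. -/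
/-- The set `s` contains an induced copy of the ordered rainbow pattern `M`
(vertices `a ≺ b ≺ c ≺ d` with exactly the edges `ad` and `bc`). -/
def HasInducedRainbowOn {V : Type} [LinearOrder V] (F : SimpleGraph V) (s : Set V) : Prop :=
  ∃ a ∈ s, ∃ b ∈ s, ∃ c ∈ s, ∃ d ∈ s,
    a < b ∧ b < c ∧ c < d ∧ F.Adj a d ∧ F.Adj b c ∧
    ¬F.Adj a b ∧ ¬F.Adj a c ∧ ¬F.Adj b d ∧ ¬F.Adj c d

/-- Chaining two rainbow-free links yields a rainbow-free ordered graph: if `F` is covered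
by `A` and `B`, with no edges between `A \ B` and `B \ A`, all of `A \ B` preceding `B`,
all of `A` preceding `B \ A`, the identified part `A ∩ B` independent, and the induced
ordered graphs on `A` and on `B` rainbow-free, then `F` is rainbow-free. -/
theorem chaining_preserves_rainbow_free {V : Type} [LinearOrder V]
    (F : SimpleGraph V) (A B : Set V)
    (hcover : A ∪ B = Set.univ)
    (hnoedge : ∀ u ∈ A \ B, ∀ v ∈ B \ A, ¬F.Adj u v)
    (horder1 : ∀ u ∈ A \ B, ∀ v ∈ B, u < v)
    (horder2 : ∀ u ∈ A, ∀ v ∈ B \ A, u < v)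
    (hindep : ∀ u ∈ A ∩ B, ∀ v ∈ A ∩ B, ¬F.Adj u v)
    (hA : ¬ HasInducedRainbowOn F A)
    (hB : ¬ HasInducedRainbowOn F B) :
    ¬ HasInducedRainbowOn F Set.univ := by
  rintro ⟨a, -, b, -, c, -, d, -, hab, hbc, hcd, had, hbc', hnab, hnac, hnbd, hncd⟩
  have mem : ∀ x : V, x ∈ A ∨ x ∈ B := by
    intro x
    have : x ∈ A ∪ B := hcover ▸ Set.mem_univ x
    exact this
  have had' : a < d := hab.trans (hbc.trans hcd)
  have key : (a ∈ A ∧ d ∈ A) ∨ (a ∈ B ∧ d ∈ B) := by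
    rcases mem a with ha | ha <;> rcases mem d with hd | hd
    · exact Or.inl ⟨ha, hd⟩
    · by_cases ha' : a ∈ B
      · exact Or.inr ⟨ha', hd⟩
      by_cases hd' : d ∈ A
      · exact Or.inl ⟨ha, hd'⟩
      exact absurd had (hnoedge a ⟨ha, ha'⟩ d ⟨hd, hd'⟩)
    · by_cases ha' : a ∈ A
      · exact Or.inl ⟨ha', hd⟩
      exact absurd had' (not_lt.mpr (horder2 d hd a ⟨ha, ha'⟩).le)
    · exact Or.inr ⟨ha, hd⟩
  rcases key with ⟨haA, hdA⟩ | ⟨haB, hdB⟩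
  · have hbA : b ∈ A := by
      rcases mem b with h | h
      · exact h
      by_cases h' : b ∈ A
      · exact h'
      exact absurd (hbc.trans hcd) (not_lt.mpr (horder2 d hdA b ⟨h, h'⟩).le)
    have hcA : c ∈ A := by
      rcases mem c with h | h
      · exact h
      by_cases h' : c ∈ A
      · exact h'
      exact absurd hcd (not_lt.mpr (horder2 d hdA c ⟨h, h'⟩).le)
    exact hA ⟨a, haA, b, hbA, c, hcA, d, hdA, hab, hbc, hcd, had, hbc',
      hnab, hnac, hnbd, hncd⟩
  · have hbB : b ∈ B := by
      rcases mem b with h | h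
      · by_cases h' : b ∈ B
        · exact h'
        exact absurd hab (not_lt.mpr (horder1 b ⟨h, h'⟩ a haB).le)
      · exact h
    have hcB : c ∈ B := by
      rcases mem c with h | h
      · by_cases h' : c ∈ B
        · exact h'
        exact absurd (hab.trans hbc) (not_lt.mpr (horder1 c ⟨h, h'⟩ a haB).le)
      · exact h
    exact hB ⟨a, haB, b, hbB, c, hcB, d, hdB, hab, hbc, hcd, had, hbc',
      hnab, hnac, hnbd, hncd⟩
end

section
/- Let G be a K_5-free graph with a linear vertex ordering that contains no induced copy of _ℓJ (ℓ isolated vertices followed by three vertices a ≺ b ≺ c with edges ab, ac only). Let v be a vertex and B'' an independent set of ℓ vertices preceding v and non-adjacent to v. If v has a set X of at least 4 forward neighbors, each non-adjacent to every vertex of B'', then X contains two non-adjacent vertices x, y, and B'' ∪ {v, x, y} induces a copy of _ℓJ — a contradiction. Formally: there is no such configuration, i.e., in such G a vertex v with an independent set B'' of ℓ non-neighbors preceding v cannot have 4 forward neighbors all non-adjacent to B''. -/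
/-- In a `K₅`-free ordered graph with no induced copy of the pattern `_ℓJ`
(`ℓ` isolated vertices followed by `a ≺ b ≺ c` with exactly the edges `ab`, `ac`),
a vertex `v` with an independent set `B` of `ℓ` non-neighbors preceding it cannot have
a set `X` of at least 4 forward neighbors all non-adjacent to `B`. -/
theorem no_four_forward_neighbors {V : Type} [LinearOrder V]
    (G : SimpleGraph V) (ℓ : ℕ)
    (hK5 : G.CliqueFree 5)
    (hfree : ∀ (s : Finset V) (a b c : V), s.card = ℓ →
      (∀ w ∈ s, w < a) → a < b → b < c →
      (∀ w ∈ s, ∀ w' ∈ s, ¬G.Adj w w') →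
      (∀ w ∈ s, ¬G.Adj w a ∧ ¬G.Adj w b ∧ ¬G.Adj w c) →
      G.Adj a b → G.Adj a c → G.Adj b c)
    (v : V) (B X : Finset V)
    (hBcard : B.card = ℓ)
    (hBind : ∀ u ∈ B, ∀ w ∈ B, ¬G.Adj u w)
    (hBv : ∀ u ∈ B, u < v)
    (hBnadj : ∀ u ∈ B, ¬G.Adj u v)
    (hXcard : 4 ≤ X.card)
    (hXfwd : ∀ x ∈ X, G.Adj v x ∧ v < x)
    (hXB : ∀ x ∈ X, ∀ u ∈ B, ¬G.Adj x u) :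
    False := by
  have hpair : ∃ x ∈ X, ∃ y ∈ X, x ≠ y ∧ ¬G.Adj x y := by
    by_contra h
    push_neg at h
    obtain ⟨S, hSX, hScard⟩ := Finset.exists_subset_card_eq hXcard
    have hvS : v ∉ S := fun hv => lt_irrefl v (hXfwd v (hSX hv)).2
    apply hK5 (insert v S)
    constructor
    · intro a ha b hb hab
      simp only [Finset.coe_insert, Set.mem_insert_iff, Finset.mem_coe] at ha hb
      rcases ha with rfl | ha
      · rcases hb with rfl | hb
        · exact absurd rfl hab
        · exact (hXfwd b (hSX hb)).1
      · rcases hb with rfl | hb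
        · exact ((hXfwd a (hSX ha)).1).symm
        · exact h a (hSX ha) b (hSX hb) hab
    · rw [Finset.card_insert_of_notMem hvS, hScard]
  obtain ⟨x, hx, y, hy, hxy, hnadj⟩ := hpair
  -- order x and y
  wlog hlt : x < y generalizing x y
  · exact this y hy x hx hxy.symm (fun h => hnadj h.symm) ((hxy.lt_or_gt).resolve_left hlt)
  exact hnadj (hfree B v x y hBcard hBv (hXfwd x hx).2 hlt hBind
    (fun w hw => ⟨hBnadj w hw, fun h => hXB x hx w hw h.symm, fun h => hXB y hy w hw h.symm⟩)
    (hXfwd x hx).1 (hXfwd y hy).1)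
end

section
/- Let G be the ordered graph from the NP-hardness construction: Z-vertices (each of degree 2 with adjacent neighborhood), followed by Y-vertices, followed by C-vertices (where each d_j comes after a_j, b_j, c_j and each of a_j,b_j,c_j has exactly one forward neighbor, namely d_j), followed by X-vertices; each Y-vertex's forward neighbors consist of one C-vertex and some X-vertices, and X-vertices have no forward neighbors. Then G contains no four vertices w1 ≺ w2 ≺ w3 ≺ w4 with edges exactly w1w2, w1w3 among all six pairs. -/
/-- The ordered graph of the NP-hardness construction, with vertex set partitioned into
`Z ≺ Y ≺ C ≺ X`, each `Z`-vertex of degree 2 with adjacent neighbors, each `C ∪ X` vertex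
with at most one forward neighbor, each `Y`-vertex having all forward neighbors in `C ∪ X`
with exactly one in `C`, and every `Y`-vertex adjacent to every `X`-vertex, contains no
induced copy of the ordered pattern `J₁` (four vertices `w1 ≺ w2 ≺ w3 ≺ w4` with edge set
exactly `{w1w2, w1w3}`). -/
theorem construction_J1_free {V : Type} [LinearOrder V]
    (G : SimpleGraph V) (Z Y C X : Set V)
    (hpart : ∀ v : V, (v ∈ Z ∧ v ∉ Y ∧ v ∉ C ∧ v ∉ X) ∨ (v ∉ Z ∧ v ∈ Y ∧ v ∉ C ∧ v ∉ X) ∨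
      (v ∉ Z ∧ v ∉ Y ∧ v ∈ C ∧ v ∉ X) ∨ (v ∉ Z ∧ v ∉ Y ∧ v ∉ C ∧ v ∈ X))
    (hZY : ∀ z ∈ Z, ∀ y ∈ Y, z < y)
    (hYC : ∀ y ∈ Y, ∀ c ∈ C, y < c)
    (hCX : ∀ c ∈ C, ∀ x ∈ X, c < x)
    (hCXfwd : ∀ v ∈ C ∪ X, ∀ u u' : V, G.Adj v u → v < u → G.Adj v u' → v < u' → u = u')
    (hZdeg : ∀ z ∈ Z, ∃ a b : V, a ≠ b ∧ G.Adj z a ∧ G.Adj z b ∧ G.Adj a b ∧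
      ∀ u : V, G.Adj z u → u = a ∨ u = b)
    (hYfwd : ∀ y ∈ Y, (∀ u : V, G.Adj y u → y < u → u ∈ C ∪ X) ∧
      (∃ c ∈ C, G.Adj y c ∧ ∀ c' ∈ C, G.Adj y c' → c' = c))
    (hYX : ∀ y ∈ Y, ∀ x ∈ X, G.Adj y x) :
    ¬ ∃ w1 w2 w3 w4 : V, w1 < w2 ∧ w2 < w3 ∧ w3 < w4 ∧
      G.Adj w1 w2 ∧ G.Adj w1 w3 ∧ ¬G.Adj w1 w4 ∧ ¬G.Adj w2 w3 ∧ ¬G.Adj w2 w4 ∧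
      ¬G.Adj w3 w4 := by
  rintro ⟨w1, w2, w3, w4, h12, h23, h34, a12, a13, na14, na23, na24, na34⟩
  rcases hpart w1 with ⟨hZ1, -, -, -⟩ | ⟨-, hY1, -, -⟩ | ⟨-, -, hC1, -⟩ | ⟨-, -, -, hX1⟩
  · obtain ⟨a, b, hab, -, -, haab, hall⟩ := hZdeg w1 hZ1
    rcases hall w2 a12 with h2 | h2 <;> rcases hall w3 a13 with h3 | h3
    · exact absurd (h2.trans h3.symm) h23.ne
    · subst h2; subst h3; exact na23 haab
    · subst h2; subst h3; exact na23 haab.symm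
    · exact absurd (h2.trans h3.symm) h23.ne
  · obtain ⟨hfwd, c0, hc0, -, huniq⟩ := hYfwd w1 hY1
    have h2 := hfwd w2 a12 h12
    have h3 := hfwd w3 a13 (h12.trans h23)
    have hw3X : w3 ∈ X := by
      rcases h3 with h3C | h3X
      · rcases h2 with h2C | h2X
        · exact absurd ((huniq w2 h2C a12).trans (huniq w3 h3C a13).symm) h23.ne
        · exact absurd (hCX w3 h3C w2 h2X) (not_lt.mpr h23.le)
      · exact h3X
    rcases hpart w4 with ⟨hZ4, -, -, -⟩ | ⟨-, hY4, -, -⟩ | ⟨-, -, hC4, -⟩ | ⟨-, -, -, hX4⟩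
    · exact absurd (hZY w4 hZ4 w1 hY1) (not_lt.mpr (h12.trans (h23.trans h34)).le)
    · exact absurd ((hYC w4 hY4 c0 hc0).trans (hCX c0 hc0 w3 hw3X)) (not_lt.mpr h34.le)
    · exact absurd (hCX w4 hC4 w3 hw3X) (not_lt.mpr h34.le)
    · exact na14 (hYX w1 hY1 w4 hX4)
  · exact absurd (hCXfwd w1 (Or.inl hC1) w2 w3 a12 h12 a13 (h12.trans h23)) h23.ne
  · exact absurd (hCXfwd w1 (Or.inr hX1) w2 w3 a12 h12 a13 (h12.trans h23)) h23.ne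
end

section
/- Consider the 'NOT-11' subgadget: vertices p, q, u, w, z with lists L(p)=L(q)={1,2}, L(u)={1,3}, L(w)={1,4}, L(z)={3,4}, and edges pu, qw, uz, wz. A proper list coloring with given values c(p), c(q) ∈ {1,2} exists extending to u, w, z if and only if not both c(p)=1 and c(q)=1. -/
/-- The NOT-11 subgadget on vertices `p, q, u, w, z` (edges `pu, qw, uz, wz`; lists
`L(p)=L(q)={1,2}`, `L(u)={1,3}`, `L(w)={1,4}`, `L(z)={3,4}`): a partial proper list
coloring of `{p, q}` extends to the whole gadget if and only if not both `c(p)=1` and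
`c(q)=1`. -/
theorem not11_subgadget (cp cq : ℕ)
    (hp : cp = 1 ∨ cp = 2) (hq : cq = 1 ∨ cq = 2) :
    (∃ cu cw cz : ℕ, (cu = 1 ∨ cu = 3) ∧ (cw = 1 ∨ cw = 4) ∧ (cz = 3 ∨ cz = 4) ∧
      cp ≠ cu ∧ cq ≠ cw ∧ cu ≠ cz ∧ cw ≠ cz) ↔ ¬(cp = 1 ∧ cq = 1) := by
  constructor
  · rintro ⟨cu, cw, cz, hu, hw, hz, h1, h2, h3, h4⟩ ⟨rfl, rfl⟩
    rcases hu with rfl | rfl <;> rcases hw with rfl | rfl <;>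
      rcases hz with rfl | rfl <;> omega
  · intro h
    rcases hp with rfl | rfl <;> rcases hq with rfl | rfl
    · exact absurd ⟨rfl, rfl⟩ h
    · exact ⟨3, 1, 4, by omega, by omega, by omega, by omega, by omega, by omega, by omega⟩
    · exact ⟨1, 4, 3, by omega, by omega, by omega, by omega, by omega, by omega, by omega⟩
    · exact ⟨1, 1, 3, by omega, by omega, by omega, by omega, by omega, by omega, by omega⟩
end
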